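/- Let J ⊆ {1,…,l} and P = {x ∈ ℝ^l : ⟨w(e_i), x⟩_B ≥ 0 for all w ∈ W_J and all i ∉ J}. For every w ∈ W, if the topological interior of the chamber D_w := w(D) meets the complement of P, then the interior of D_w is entirely contained in the complement of P. -/

import Mathlib

open Matrix Finset

/-- The Gram matrix `B` with `B i i = 1` and `B i k = -(b i k)/2` for `i ≠ k`. -/
noncomputable def gramB (l : ℕ) (b : Fin l → Fin l → ℝ) : Matrix (Fin l) (Fin l) ℝ :=
  fun i k => if i = k then 1 else -(b i k) / 2

/-- The bilinear form `⟨v, w⟩_B = vᵀ B w`. -/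
noncomputable def bform (l : ℕ) (b : Fin l → Fin l → ℝ) (v w : Fin l → ℝ) : ℝ :=
  dotProduct v ((gramB l b).mulVec w)

/-- The matrix `M j` of the reflection `σ j (w) = w - 2⟨w, e j⟩_B e j`: it agrees with
the identity except in row `j`, where `(M j) j j = -1` and `(M j) j k = b j k` for `k ≠ j`. -/
noncomputable def reflM (l : ℕ) (b : Fin l → Fin l → ℝ) (j : Fin l) :
    Matrix (Fin l) (Fin l) ℝ :=
  fun r c => if r = j then (if c = j then -1 else b j c) else (if r = c then 1 else 0)

/-- The subgroup `W_J` generated by the reflections `σ j`, `j ∈ J` (since each `σ j` is an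
involution, it coincides with the submonoid generated by them). -/
noncomputable def WJ (l : ℕ) (b : Fin l → Fin l → ℝ) (J : Set (Fin l)) :
    Submonoid (Matrix (Fin l) (Fin l) ℝ) :=
  Submonoid.closure (reflM l b '' J)

/-- The fundamental chamber `D = {x : ⟨x, e i⟩_B ≥ 0 for all i}`. -/
noncomputable def chamberD (l : ℕ) (b : Fin l → Fin l → ℝ) : Set (Fin l → ℝ) :=
  {x | ∀ i : Fin l, 0 ≤ bform l b x (Pi.single i 1)}

/-- The cone `T_J = ⋃_{w ∈ W_J} w(D)`. -/
noncomputable def TJ (l : ℕ) (b : Fin l → Fin l → ℝ) (J : Set (Fin l)) : Set (Fin l → ℝ) :=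
  {y | ∃ w ∈ WJ l b J, ∃ x ∈ chamberD l b, y = w.mulVec x}


variable {l : ℕ} {b : Fin l → Fin l → ℝ}

lemma reflM_mulVec_ne {j k : Fin l} (hk : k ≠ j) (x : Fin l → ℝ) :
    (reflM l b j *ᵥ x) k = x k := by
  simp only [mulVec, dotProduct, reflM, if_neg hk]
  rw [Finset.sum_eq_single k]
  · simp
  · intro s _ hs; simp [Ne.symm hs]
  · simp

lemma reflM_mulVec_self (j : Fin l) (x : Fin l → ℝ) :
    (reflM l b j *ᵥ x) j = -x j + ∑ s ∈ univ.erase j, b j s * x s := by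
  simp only [mulVec, dotProduct, reflM, eq_self_iff_true, if_true]
  rw [← Finset.add_sum_erase _ _ (mem_univ j)]
  have h2 : ∑ s ∈ univ.erase j, (if s = j then (-1 : ℝ) else b j s) * x s
      = ∑ s ∈ univ.erase j, b j s * x s :=
    Finset.sum_congr rfl fun s hs => by rw [if_neg (Finset.mem_erase.1 hs).1]
  rw [h2]
  simp only [if_true]
  ring

lemma gram_mulVec_apply (j : Fin l) (x : Fin l → ℝ) :
    (gramB l b *ᵥ x) j = x j - ∑ s ∈ univ.erase j, (b j s / 2) * x s := by
  simp only [mulVec, dotProduct, gramB, eq_self_iff_true, if_true]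
  rw [← Finset.add_sum_erase _ _ (mem_univ j)]
  have h2 : ∑ s ∈ univ.erase j, (if j = s then (1 : ℝ) else -(b j s) / 2) * x s
      = ∑ s ∈ univ.erase j, -((b j s / 2) * x s) :=
    Finset.sum_congr rfl fun s hs => by
      rw [if_neg (Ne.symm (Finset.mem_erase.1 hs).1)]; ring
  rw [h2, Finset.sum_neg_distrib]
  simp only [if_true]
  ring

lemma reflM_mulVec (j : Fin l) (x : Fin l → ℝ) :
    reflM l b j *ᵥ x = x - (2 * (gramB l b *ᵥ x) j) • (Pi.single j 1 : Fin l → ℝ) := by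
  funext k
  by_cases hk : k = j
  · subst hk
    rw [reflM_mulVec_self, gram_mulVec_apply]
    simp only [Pi.sub_apply, Pi.smul_apply, Pi.single_eq_same, smul_eq_mul, mul_one]
    rw [mul_sub, Finset.mul_sum]
    have : ∑ s ∈ univ.erase k, 2 * (b k s / 2 * x s) = ∑ s ∈ univ.erase k, b k s * x s :=
      Finset.sum_congr rfl fun s _ => by ring
    rw [this]; ring
  · rw [reflM_mulVec_ne hk]
    simp [Pi.single_eq_of_ne hk]

lemma reflM_mulVec_involutive (j : Fin l) (x : Fin l → ℝ) :
    reflM l b j *ᵥ (reflM l b j *ᵥ x) = x := by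
  funext k
  by_cases hk : k = j
  · subst hk
    rw [reflM_mulVec_self, reflM_mulVec_self]
    have : ∑ s ∈ univ.erase k, b k s * (reflM l b k *ᵥ x) s
        = ∑ s ∈ univ.erase k, b k s * x s :=
      Finset.sum_congr rfl fun s hs => by
        rw [reflM_mulVec_ne (Finset.mem_erase.1 hs).1]
    rw [this]; ring
  · rw [reflM_mulVec_ne hk, reflM_mulVec_ne hk]

lemma reflM_sq (j : Fin l) : reflM l b j * reflM l b j = 1 := by
  ext r c
  have h := congrFun (reflM_mulVec_involutive (b := b) j (Pi.single c 1)) r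
  rw [mulVec_mulVec] at h
  simpa [mulVec_single, Matrix.one_apply, Pi.single_apply, eq_comm] using h

lemma gram_symm (hsym : ∀ i j, i ≠ j → b i j = b j i) (r c : Fin l) :
    gramB l b r c = gramB l b c r := by
  unfold gramB
  by_cases h : r = c
  · simp [h]
  · rw [if_neg h, if_neg (Ne.symm h), hsym r c h]

lemma bform_single_left (j : Fin l) (x : Fin l → ℝ) :
    bform l b (Pi.single j 1) x = (gramB l b *ᵥ x) j := by
  simp [bform, single_dotProduct]

lemma bform_single_right (hsym : ∀ i j, i ≠ j → b i j = b j i) (x : Fin l → ℝ) (k : Fin l) :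
    bform l b x (Pi.single k 1) = (gramB l b *ᵥ x) k := by
  simp only [bform, dotProduct, mulVec, Pi.single_apply, mul_ite, mul_one, mul_zero,
    Finset.sum_ite_eq, Finset.sum_ite_eq', Finset.mem_univ, if_true]
  exact Finset.sum_congr rfl fun s _ => by rw [gram_symm hsym k s]; ring

lemma bform_single_single (j : Fin l) :
    bform l b (Pi.single j 1) (Pi.single j 1) = 1 := by
  rw [bform_single_left]
  simp [mulVec_single, gramB]

lemma bform_reflM (hsym : ∀ i j, i ≠ j → b i j = b j i) (j : Fin l) (x y : Fin l → ℝ) :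
    bform l b (reflM l b j *ᵥ x) (reflM l b j *ᵥ y) = bform l b x y := by
  rw [reflM_mulVec, reflM_mulVec]
  simp only [bform, mulVec_sub, mulVec_smul, dotProduct_sub, sub_dotProduct,
    dotProduct_smul, smul_dotProduct, smul_eq_mul]
  have h1 : Pi.single j (1:ℝ) ⬝ᵥ gramB l b *ᵥ y = (gramB l b *ᵥ y) j := by
    rw [single_dotProduct, one_mul]
  have h2 : (x ⬝ᵥ gramB l b *ᵥ Pi.single j 1 : ℝ) = (gramB l b *ᵥ x) j :=
    bform_single_right hsym x j
  have h3 : (Pi.single j (1:ℝ) ⬝ᵥ gramB l b *ᵥ Pi.single j 1 : ℝ) = 1 :=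
    bform_single_single j
  rw [h1, h2, h3]
  ring

lemma WJ_inv {w : Matrix (Fin l) (Fin l) ℝ} (hw : w ∈ WJ l b Set.univ) :
    ∃ w' ∈ WJ l b Set.univ, w * w' = 1 ∧ w' * w = 1 := by
  induction hw using Submonoid.closure_induction with
  | mem x hx =>
    obtain ⟨j, -, rfl⟩ := hx
    exact ⟨reflM l b j, Submonoid.subset_closure ⟨j, Set.mem_univ j, rfl⟩, reflM_sq j, reflM_sq j⟩
  | one => exact ⟨1, one_mem _, one_mul 1, one_mul 1⟩
  | mul x y hx hy ihx ihy =>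
    obtain ⟨x', hx', hx1, hx2⟩ := ihx
    obtain ⟨y', hy', hy1, hy2⟩ := ihy
    refine ⟨y' * x', mul_mem hy' hx', ?_, ?_⟩
    · rw [mul_assoc, ← mul_assoc y, hy1, one_mul, hx1]
    · rw [mul_assoc, ← mul_assoc x', hx2, one_mul, hy2]

lemma bform_W (hsym : ∀ i j, i ≠ j → b i j = b j i) {w : Matrix (Fin l) (Fin l) ℝ}
    (hw : w ∈ WJ l b Set.univ) (x y : Fin l → ℝ) :
    bform l b (w *ᵥ x) (w *ᵥ y) = bform l b x y := by
  induction hw using Submonoid.closure_induction generalizing x y with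
  | mem u hu => obtain ⟨j, -, rfl⟩ := hu; exact bform_reflM hsym j x y
  | one => simp
  | mul u v hu hv ihu ihv =>
    rw [← mulVec_mulVec, ← mulVec_mulVec, ihu, ihv]

lemma reduce_word : ∀ n (s : List (Fin l)), s.length ≤ n →
    ∃ t : List (Fin l), t.Chain' (· ≠ ·) ∧
      (t.map (reflM l b)).prod = (s.map (reflM l b)).prod := by
  intro n
  induction n with
  | zero =>
    intro s hs
    rw [List.length_eq_zero_iff.1 (Nat.le_zero.1 hs)]
    exact ⟨[], List.isChain_nil, rfl⟩
  | succ n ih =>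
    intro s hs
    match s with
    | [] => exact ⟨[], List.isChain_nil, rfl⟩
    | x :: rest =>
      obtain ⟨t, ht, hp⟩ := ih rest (by simp only [List.length_cons] at hs; omega)
      match t with
      | [] =>
        refine ⟨[x], List.isChain_singleton x, ?_⟩
        simp only [List.map_cons, List.prod_cons, List.map_nil, List.prod_nil] at hp ⊢
        rw [← hp]
      | h :: t' =>
        by_cases hxh : x = h
        · refine ⟨t', ht.tail, ?_⟩
          have : (rest.map (reflM l b)).prod
              = reflM l b h * (t'.map (reflM l b)).prod := by
            rw [← hp]; simp [List.map_cons, List.prod_cons]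
          simp only [List.map_cons, List.prod_cons, this, hxh, ← mul_assoc, reflM_sq, one_mul]
        · refine ⟨x :: h :: t', List.isChain_cons_cons.2 ⟨hxh, ht⟩, ?_⟩
          simp only [List.map_cons, List.prod_cons] at hp ⊢
          rw [hp]

lemma root_nonneg (hge : ∀ i j, i ≠ j → 2 ≤ b i j) :
    ∀ (s : List (Fin l)) (i : Fin l), s.Chain' (· ≠ ·) → s.getLast? ≠ some i →
    (∀ k, 0 ≤ ((s.map (reflM l b)).prod *ᵥ Pi.single i 1) k) ∧
    (∀ k, ((s.map (reflM l b)).prod *ᵥ Pi.single i 1) k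
        ≤ ((s.map (reflM l b)).prod *ᵥ Pi.single i 1) (s.headD i)) := by
  intro s
  induction s with
  | nil =>
    intro i _ _
    simp only [List.map_nil, List.prod_nil, one_mulVec, List.headD_nil]
    constructor
    · intro k; rw [Pi.single_apply]; positivity
    · intro k; rw [Pi.single_apply, Pi.single_eq_same]; split <;> norm_num
  | cons j s' ih =>
    intro i hchain hlast
    set p : Fin l := s'.headD i with hp
    have hjp : j ≠ p := by
      cases s' with
      | nil =>
        simp only [List.getLast?_singleton] at hlast
        simpa [hp] using fun h => hlast (by rw [h])
      | cons a s'' =>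
        have := List.isChain_cons_cons.1 hchain
        simpa [hp] using this.1
    have hlast' : s'.getLast? ≠ some i := by
      cases s' with
      | nil => simp
      | cons a s'' => rwa [List.getLast?_cons_cons] at hlast
    obtain ⟨h0, hmax⟩ := ih i hchain.tail hlast'
    set c' : Fin l → ℝ := (s'.map (reflM l b)).prod *ᵥ Pi.single i 1 with hc'
    have hcc : ((j :: s').map (reflM l b)).prod *ᵥ Pi.single i 1 = reflM l b j *ᵥ c' := by
      rw [List.map_cons, List.prod_cons, ← mulVec_mulVec]
    rw [hcc]
    have hkey : c' p ≤ (reflM l b j *ᵥ c') j := by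
      rw [reflM_mulVec_self]
      have h1 : c' p ≤ ∑ s ∈ univ.erase j, c' s :=
        Finset.single_le_sum (f := c') (fun s _ => h0 s)
          (Finset.mem_erase.2 ⟨Ne.symm hjp, mem_univ p⟩)
      have h2 : ∑ s ∈ univ.erase j, 2 * c' s ≤ ∑ s ∈ univ.erase j, b j s * c' s :=
        Finset.sum_le_sum fun s hs =>
          mul_le_mul_of_nonneg_right (hge j s (Ne.symm (Finset.mem_erase.1 hs).1)) (h0 s)
      have h3 : c' j ≤ c' p := hmax j
      have h2' : 2 * ∑ s ∈ univ.erase j, c' s ≤ ∑ s ∈ univ.erase j, b j s * c' s := by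
        rw [Finset.mul_sum]; exact h2
      linarith
    have hj0 : (0:ℝ) ≤ (reflM l b j *ᵥ c') j := le_trans (h0 p) hkey
    constructor
    · intro k
      by_cases hk : k = j
      · rw [hk]; exact hj0
      · rw [reflM_mulVec_ne hk]; exact h0 k
    · intro k
      have hhead : (j :: s').headD i = j := rfl
      rw [hhead]
      by_cases hk : k = j
      · rw [hk]
      · rw [reflM_mulVec_ne hk]
        exact le_trans (hmax k) hkey

lemma root_dichotomy (hge : ∀ i j, i ≠ j → 2 ≤ b i j) {w : Matrix (Fin l) (Fin l) ℝ}
    (hw : w ∈ WJ l b Set.univ) (i : Fin l) :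
    (∀ k, 0 ≤ (w *ᵥ Pi.single i 1) k) ∨ (∀ k, (w *ᵥ Pi.single i 1) k ≤ 0) := by
  obtain ⟨L, hL, hprod⟩ := Submonoid.exists_list_of_mem_closure hw
  have hex : ∃ s : List (Fin l), s.map (reflM l b) = L := by
    clear hprod
    induction L with
    | nil => exact ⟨[], rfl⟩
    | cons x L ihL =>
      obtain ⟨j, -, rfl⟩ := hL x List.mem_cons_self
      obtain ⟨s, rfl⟩ := ihL fun y hy => hL y (List.mem_cons_of_mem _ hy)
      exact ⟨j :: s, rfl⟩
  obtain ⟨s, rfl⟩ := hex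
  obtain ⟨t, hchain, hpeq⟩ := reduce_word s.length s le_rfl
  rw [← hprod, ← hpeq]
  rcases t.eq_nil_or_concat' with rfl | ⟨t', a, rfl⟩
  · left; intro k
    simp only [List.map_nil, List.prod_nil, one_mulVec, Pi.single_apply]
    positivity
  · have hsplit := List.isChain_append.1 hchain
    have hprodsplit : ((t' ++ [a]).map (reflM l b)).prod
        = (t'.map (reflM l b)).prod * reflM l b a := by
      rw [List.map_append, List.prod_append]; simp
    by_cases hai : a = i
    · right
      subst hai
      have hMi : reflM l b a *ᵥ Pi.single a (1:ℝ) = -Pi.single a 1 := by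
        funext m
        by_cases hm : m = a
        · subst hm
          rw [reflM_mulVec_self]
          have hz : ∑ s ∈ univ.erase m, b m s * (Pi.single m 1 : Fin l → ℝ) s = 0 :=
            Finset.sum_eq_zero fun s hs => by
              rw [Pi.single_eq_of_ne (Finset.mem_erase.1 hs).1, mul_zero]
          rw [hz]; simp
        · rw [reflM_mulVec_ne hm]
          simp [Pi.single_eq_of_ne hm]
      have hEq : ((t' ++ [a]).map (reflM l b)).prod *ᵥ Pi.single a 1
          = -((t'.map (reflM l b)).prod *ᵥ Pi.single a 1) := by
        rw [hprodsplit, ← mulVec_mulVec, hMi, mulVec_neg]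
      rw [hEq]
      have hlast' : t'.getLast? ≠ some a := by
        intro h
        have := hsplit.2.2 a (by rw [h]; rfl) a rfl
        exact this rfl
      intro k
      have := (root_nonneg hge t' a hsplit.1 hlast').1 k
      simp only [Pi.neg_apply]
      linarith
    · left
      have hlastne : (t' ++ [a]).getLast? ≠ some i := by
        rw [List.getLast?_concat]
        simpa using hai
      exact (root_nonneg hge (t' ++ [a]) i hchain hlastne).1

lemma bform_sub_left (x y z : Fin l → ℝ) :
    bform l b (x - y) z = bform l b x z - bform l b y z := by
  simp [bform, sub_dotProduct]

lemma bform_smul_left (c : ℝ) (x z : Fin l → ℝ) :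
    bform l b (c • x) z = c * bform l b x z := by
  simp [bform, smul_dotProduct]

lemma bform_eq_sum (hsym : ∀ i j, i ≠ j → b i j = b j i) (x y : Fin l → ℝ) :
    bform l b x y = ∑ k, x k * bform l b y (Pi.single k 1) := by
  have h : ∀ k, bform l b y (Pi.single k 1) = (gramB l b *ᵥ y) k := bform_single_right hsym y
  simp only [h]
  rfl

/-- The homeomorphism given by an invertible matrix. -/
noncomputable def mulVecHomeo (w w' : Matrix (Fin l) (Fin l) ℝ)
    (h1 : w * w' = 1) (h2 : w' * w = 1) : (Fin l → ℝ) ≃ₜ (Fin l → ℝ) where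
  toFun := w.mulVec
  invFun := w'.mulVec
  left_inv x := by rw [mulVec_mulVec, h2, one_mulVec]
  right_inv x := by rw [mulVec_mulVec, h1, one_mulVec]
  continuous_toFun := (Matrix.mulVecLin w).continuous_of_finiteDimensional
  continuous_invFun := (Matrix.mulVecLin w').continuous_of_finiteDimensional

lemma interior_chamber_pos {y : Fin l → ℝ} (hy : y ∈ interior (chamberD l b)) (k : Fin l) :
    0 < bform l b y (Pi.single k 1) := by
  have hmem : 0 ≤ bform l b y (Pi.single k 1) := interior_subset hy k
  rcases lt_or_eq_of_le hmem with h | h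
  · exact h
  · exfalso
    rw [mem_interior_iff_mem_nhds, Metric.mem_nhds_iff] at hy
    obtain ⟨ε, hε, hball⟩ := hy
    set z : Fin l → ℝ := y - (ε / 2) • (Pi.single k 1 : Fin l → ℝ) with hz
    have hznorm : dist z y < ε := by
      rw [dist_eq_norm]
      have : z - y = -((ε / 2) • (Pi.single k 1 : Fin l → ℝ)) := by rw [hz]; abel
      rw [this, norm_neg, norm_smul]
      have h1 : ‖(Pi.single k 1 : Fin l → ℝ)‖ ≤ 1 := by
        rw [pi_norm_le_iff_of_nonneg zero_le_one]
        intro i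
        rw [Pi.single_apply]
        split <;> simp
      have h2 : ‖(ε / 2 : ℝ)‖ = ε / 2 := by rw [Real.norm_eq_abs, abs_of_pos (by linarith)]
      nlinarith [norm_nonneg (Pi.single k 1 : Fin l → ℝ)]
    have hzD : z ∈ chamberD l b := hball (Metric.mem_ball.2 hznorm)
    have := hzD k
    rw [hz, bform_sub_left, bform_smul_left, bform_single_single] at this
    linarith


/-- **Chambers do not cross the walls of `P`.**
Let `P = {x : ⟨w(e i), x⟩_B ≥ 0 for all w ∈ W_J, i ∉ J}`. For every `w` in the full
group `W`, if the interior of the chamber `D_w = w(D)` meets the complement of `P`,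
then the interior of `D_w` is contained in the complement of `P`. -/
theorem chamber_interior_subset_compl (l : ℕ) (hl : 2 ≤ l) (b : Fin l → Fin l → ℝ)
    (hsym : ∀ i j, i ≠ j → b i j = b j i) (hge : ∀ i j, i ≠ j → 2 ≤ b i j)
    (J : Set (Fin l)) (w : Matrix (Fin l) (Fin l) ℝ) (hw : w ∈ WJ l b Set.univ) :
    let P : Set (Fin l → ℝ) := {x | ∀ u ∈ WJ l b J, ∀ i : Fin l, i ∉ J →
      0 ≤ bform l b (u.mulVec (Pi.single i 1)) x}
    (interior (w.mulVec '' chamberD l b) ∩ Pᶜ).Nonempty →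
      interior (w.mulVec '' chamberD l b) ⊆ Pᶜ := by

  intro P hne x hx
  obtain ⟨x₀, hx₀int, hx₀P⟩ := hne
  have hx₀P' : ¬ ∀ u ∈ WJ l b J, ∀ i : Fin l, i ∉ J →
      0 ≤ bform l b (u.mulVec (Pi.single i 1)) x₀ := hx₀P
  push_neg at hx₀P'
  obtain ⟨u, hu, i, hiJ, hneg⟩ := hx₀P'
  obtain ⟨w', hw', hww', hw'w⟩ := WJ_inv hw
  have hu' : u ∈ WJ l b Set.univ :=
    Submonoid.closure_mono (Set.image_mono (Set.subset_univ J)) hu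
  have hv : w' * u ∈ WJ l b Set.univ := mul_mem hw' hu'
  set c : Fin l → ℝ := (w' * u) *ᵥ Pi.single i 1 with hc
  -- key: bform (u e_i) (w y) = bform c y
  have hkey : ∀ y : Fin l → ℝ, bform l b (u *ᵥ Pi.single i 1) (w *ᵥ y) = bform l b c y := by
    intro y
    have h1 : u *ᵥ Pi.single i 1 = w *ᵥ c := by
      rw [hc, mulVec_mulVec, ← mul_assoc, hww', one_mul]
    rw [h1, bform_W hsym hw]
  -- interior points come from interior of D
  set e := mulVecHomeo w w' hww' hw'w with he
  have him : interior (w.mulVec '' chamberD l b) = w.mulVec '' interior (chamberD l b) := by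
    have : w.mulVec '' interior (chamberD l b) = e '' interior (chamberD l b) := rfl
    rw [this, Homeomorph.image_interior]
    rfl
  rw [him] at hx₀int hx
  obtain ⟨y₀, hy₀, rfl⟩ := hx₀int
  obtain ⟨y, hy, rfl⟩ := hx
  -- there is a strictly negative coefficient
  have hsum0 : ∑ k, c k * bform l b y₀ (Pi.single k 1) < 0 := by
    rw [← bform_eq_sum hsym, ← hkey y₀]
    exact hneg
  have hex : ∃ k₀, c k₀ < 0 := by
    by_contra hcon
    push_neg at hcon
    exact absurd (Finset.sum_nonneg fun k _ =>
      mul_nonneg (hcon k) (interior_chamber_pos hy₀ k).le) (not_le.2 hsum0)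
  obtain ⟨k₀, hk₀⟩ := hex
  have hcle : ∀ k, c k ≤ 0 := by
    rcases root_dichotomy hge hv i with hpos | hneg'
    · exact absurd (hpos k₀) (not_le.2 hk₀)
    · exact hneg'
  -- conclude
  intro hxP
  have h0 : 0 ≤ bform l b (u *ᵥ Pi.single i 1) (w *ᵥ y) := hxP u hu i hiJ
  rw [hkey y, bform_eq_sum hsym] at h0
  have hterm : c k₀ * bform l b y (Pi.single k₀ 1) < 0 :=
    mul_neg_of_neg_of_pos hk₀ (interior_chamber_pos hy k₀)
  have hrest : ∑ k ∈ univ.erase k₀, c k * bform l b y (Pi.single k 1) ≤ 0 :=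
    Finset.sum_nonpos fun k _ =>
      mul_nonpos_of_nonpos_of_nonneg (hcle k) (interior_chamber_pos hy k).le
  rw [← Finset.add_sum_erase _ _ (mem_univ k₀)] at h0
  linarith
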